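/- Let n ≥ 3 and let m_2 = 1 and m_3, …, m_n ∈ {0, ±1, ±2} be integers satisfying one of the two conditions: (i) m_{2i} = 1 for every index 2i with 2 ≤ 2i ≤ n, or (ii) m_{2i+1} = 1 for every index 2i+1 with 3 ≤ 2i+1 ≤ n. Then there exist s_2, …, s_{n−1} ∈ {0, ±1, ±2} and t_2, …, t_{n−2} ∈ {0, 1} such that m_3 = s_2 and m_i = m_{i−1}·s_{i−1} + m_{i−2}·t_{i−2} for all 4 ≤ i ≤ n. -/
import Mathlib


/-- If m_2 = 1 and m_3, …, m_n ∈ {0, ±1, ±2} satisfy either m_{2i} = 1 for all i or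
m_{2i+1} = 1 for all i, then there exist s_2, …, s_{n−1} ∈ {0, ±1, ±2} and
t_2, …, t_{n−2} ∈ {0, 1} with m_3 = s_2 and
m_i = m_{i−1} s_{i−1} + m_{i−2} t_{i−2} for 4 ≤ i ≤ n. -/
theorem exists_s_t_solving_recursion (n : ℕ) (hn : 3 ≤ n) (m : ℕ → ℤ)
    (hm2 : m 2 = 1)
    (hmval : ∀ i, 3 ≤ i → i ≤ n → m i ∈ ({0, 1, -1, 2, -2} : Set ℤ))
    (hcond : (∀ i : ℕ, 2 ≤ 2 * i → 2 * i ≤ n → m (2 * i) = 1) ∨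
             (∀ i : ℕ, 3 ≤ 2 * i + 1 → 2 * i + 1 ≤ n → m (2 * i + 1) = 1)) :
    ∃ s t : ℕ → ℤ,
      (∀ i, 2 ≤ i → i ≤ n - 1 → s i ∈ ({0, 1, -1, 2, -2} : Set ℤ)) ∧
      (∀ i, 2 ≤ i → i ≤ n - 2 → t i ∈ ({0, 1} : Set ℤ)) ∧
      m 3 = s 2 ∧
      (∀ i, 4 ≤ i → i ≤ n → m i = m (i - 1) * s (i - 1) + m (i - 2) * t (i - 2)) := by
  rcases hcond with h | h
  · -- even indices are 1
    have hev : ∀ i, 2 ≤ i → i ≤ n → i % 2 = 0 → m i = 1 := by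
      intro i h2 hin hp
      have := h (i / 2) (by omega) (by omega)
      rwa [show 2 * (i / 2) = i by omega] at this
    refine ⟨fun j => if j % 2 = 0 then m (j + 1) else 0,
            fun j => if j % 2 = 0 then 1 else 0, ?_, ?_, ?_, ?_⟩
    · intro i h2 hin
      by_cases hp : i % 2 = 0
      · simp only [hp, if_true]
        exact hmval (i + 1) (by omega) (by omega)
      · simp [hp]
    · intro i h2 hin
      by_cases hp : i % 2 = 0 <;> simp [hp]
    · norm_num
    · intro i h4 hin
      beta_reduce
      by_cases hp : i % 2 = 0
      · rw [if_neg (by omega), if_pos (by omega)]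
        have h1 : m i = 1 := hev i (by omega) (by omega) hp
        have h2 : m (i - 2) = 1 := hev (i - 2) (by omega) (by omega) (by omega)
        rw [h1, h2]; ring
      · rw [if_pos (by omega), if_neg (by omega)]
        have h1 : m (i - 1) = 1 := hev (i - 1) (by omega) (by omega) (by omega)
        rw [show i - 1 + 1 = i by omega, h1]; ring
  · -- odd indices are 1
    have hod : ∀ i, 3 ≤ i → i ≤ n → i % 2 = 1 → m i = 1 := by
      intro i h3 hin hp
      have := h ((i - 1) / 2) (by omega) (by omega)
      rwa [show 2 * ((i - 1) / 2) + 1 = i by omega] at this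
    refine ⟨fun j => if j = 2 then m 3 else if j % 2 = 1 then m (j + 1) else 0,
            fun j => if j % 2 = 1 then 1 else 0, ?_, ?_, ?_, ?_⟩
    · intro i h2 hin
      by_cases h2' : i = 2
      · simp only [h2', if_true]
        exact hmval 3 (by omega) (by omega)
      · beta_reduce
        rw [if_neg h2']
        by_cases hp : i % 2 = 1
        · simp only [hp, if_true]
          exact hmval (i + 1) (by omega) (by omega)
        · simp [hp]
    · intro i h2 hin
      by_cases hp : i % 2 = 1 <;> simp [hp]
    · norm_num
    · intro i h4 hin
      beta_reduce
      by_cases hp : i % 2 = 0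
      · rw [if_neg (by omega), if_pos (by omega), if_neg (by omega)]
        have h1 : m (i - 1) = 1 := hod (i - 1) (by omega) (by omega) (by omega)
        rw [show i - 1 + 1 = i by omega, h1]; ring
      · rw [if_neg (by omega), if_neg (by omega), if_pos (by omega)]
        have h1 : m i = 1 := hod i (by omega) (by omega) (by omega)
        have h2 : m (i - 2) = 1 := hod (i - 2) (by omega) (by omega) (by omega)
        rw [h1, h2]; ring
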